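/- Let N be a positive integer and f₁ ≤ f₂ real numbers. The N×N matrix R_I with entries R_I(i,l) = (f₂ − f₁)·e^{iπ(f₂+f₁)(i−l)}·sinc(π(f₂ − f₁)(i−l)) is Hermitian positive semidefinite: for every s ∈ ℂ^N, the quadratic form s† R_I s is a nonnegative real number. -/

import Mathlib

set_option maxHeartbeats 1000000

open Matrix Complex intervalIntegral

noncomputable def sinc (x : ℝ) : ℝ := if x = 0 then 1 else Real.sin x / x

lemma sinc_zero : sinc 0 = 1 := if_pos rfl

lemma sinc_neg (x : ℝ) : sinc (-x) = sinc x := by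
  unfold sinc
  rcases eq_or_ne x 0 with h | h
  · simp [h]
  · rw [if_neg (neg_ne_zero.mpr h), if_neg h, Real.sin_neg, neg_div_neg_eq]

lemma exp_integrable (c : ℂ) (a b : ℝ) :
    IntervalIntegrable (fun f : ℝ => Complex.exp (c * f)) MeasureTheory.volume a b :=
  (Complex.continuous_exp.comp (continuous_const.mul Complex.continuous_ofReal)).intervalIntegrable a b

lemma sinc_integral (f₁ f₂ k : ℝ) :
    (∫ f in f₁..f₂, Complex.exp ((2 * Real.pi * Complex.I * k) * f)) =
      ((f₂ : ℂ) - f₁) * Complex.exp (Complex.I * Real.pi * ((f₂ : ℝ) + f₁) * k)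
        * ((sinc (Real.pi * (f₂ - f₁) * k) : ℝ) : ℂ) := by
  rcases eq_or_ne k 0 with hk | hk
  · simp [hk, sinc_zero]
  rcases eq_or_ne f₂ f₁ with hff | hff
  · simp [hff]
  have hc : (2 * (Real.pi : ℂ) * Complex.I * k) ≠ 0 := by
    simp [Real.pi_ne_zero, Complex.I_ne_zero, hk]
  rw [integral_exp_mul_complex hc]
  have hx : Real.pi * (f₂ - f₁) * k ≠ 0 :=
    mul_ne_zero (mul_ne_zero Real.pi_ne_zero (sub_ne_zero.mpr hff)) hk
  rw [show sinc (Real.pi * (f₂ - f₁) * k)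
      = Real.sin (Real.pi * (f₂ - f₁) * k) / (Real.pi * (f₂ - f₁) * k) from if_neg hx]
  rw [div_eq_iff hc]
  set X : ℂ := (Real.pi : ℂ) * ((f₂ : ℂ) - f₁) * k with hX
  set E : ℂ := Complex.I * (Real.pi : ℂ) * ((f₂ : ℂ) + f₁) * k with hE
  have hXne : X ≠ 0 := by
    rw [hX]
    exact mul_ne_zero (mul_ne_zero (Complex.ofReal_ne_zero.mpr Real.pi_ne_zero)
      (sub_ne_zero.mpr (fun h => hff (by exact_mod_cast h)))) (Complex.ofReal_ne_zero.mpr hk)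
  have h1 : (2 * (Real.pi : ℂ) * Complex.I * k) * f₂ = E + X * Complex.I := by
    rw [hX, hE]; push_cast; ring
  have h2 : (2 * (Real.pi : ℂ) * Complex.I * k) * f₁ = E - X * Complex.I := by
    rw [hX, hE]; push_cast; ring
  have hcast : ((Real.sin (Real.pi * (f₂ - f₁) * k) / (Real.pi * (f₂ - f₁) * k) : ℝ) : ℂ)
      = Complex.sin X / X := by
    rw [hX]; push_cast [Complex.ofReal_sin]; ring_nf
  rw [h1, h2, hcast, Complex.exp_add, Complex.exp_sub]
  have htwo := Complex.two_sin X
  rw [neg_mul, Complex.exp_neg] at htwo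
  have hrel : ((f₂:ℂ) - f₁) * (2 * (Real.pi:ℂ) * Complex.I * k) = 2 * Complex.I * X := by
    rw [hX]; ring
  have hu : Complex.exp (X * Complex.I) ≠ 0 := Complex.exp_ne_zero _
  field_simp
  have htwo' : 2 * Complex.sin X * cexp (X * Complex.I)
      = (1 - cexp (X * Complex.I) ^ 2) * Complex.I := by
    field_simp at htwo
    linear_combination htwo
  linear_combination (-(cexp (X * Complex.I) * Complex.sin X)) * hrel
    - (X * Complex.I) * htwo'
    + (X * (cexp (X * Complex.I) ^ 2 - 1)) * Complex.I_mul_I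

theorem stmt5 (N : ℕ) (hN : 0 < N) (f₁ f₂ : ℝ) (hf : f₁ ≤ f₂)
    (RI : Matrix (Fin N) (Fin N) ℂ)
    (hRI : ∀ i l : Fin N, RI i l =
      (f₂ - f₁) * Complex.exp (Complex.I * Real.pi * (f₂ + f₁) * ((i : ℝ) - (l : ℝ)))
        * (sinc (Real.pi * (f₂ - f₁) * ((i : ℝ) - (l : ℝ))) : ℝ)) :
    RI.IsHermitian ∧
    ∀ s : Fin N → ℂ, (star s ⬝ᵥ RI.mulVec s).im = 0 ∧ 0 ≤ (star s ⬝ᵥ RI.mulVec s).re := by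
  have hRI' : ∀ i l : Fin N, RI i l =
      ∫ f in f₁..f₂, Complex.exp ((2 * Real.pi * Complex.I * ((i : ℝ) - (l : ℝ))) * f) := by
    intro i l
    have h := sinc_integral f₁ f₂ ((i : ℝ) - (l : ℝ))
    push_cast at h
    rw [hRI i l]
    push_cast
    rw [← h]
  constructor
  · ext i l
    rw [Matrix.conjTranspose_apply, hRI i l, hRI l i]
    simp only [RCLike.star_def, _root_.map_mul, map_sub, map_add, Complex.conj_ofReal,
      ← Complex.exp_conj, Complex.conj_I]
    rw [show Real.pi * (f₂ - f₁) * ((l : ℝ) - (i : ℝ))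
        = -(Real.pi * (f₂ - f₁) * ((i : ℝ) - (l : ℝ))) from by ring, sinc_neg]
    congr 2
    push_cast; ring
  · intro s
    set g : ℝ → ℂ := fun f =>
      ∑ i : Fin N, (starRingEnd ℂ) (s i) * Complex.exp ((2 * Real.pi * Complex.I * (i : ℝ)) * f)
      with hg
    have hcont : ∀ (z w : ℂ) (c d : ℂ), Continuous fun f : ℝ =>
        (z * Complex.exp (c * f)) * (w * Complex.exp (d * f)) :=
      fun z w c d =>
      ((continuous_const.mul (Complex.continuous_exp.comp
        (continuous_const.mul Complex.continuous_ofReal))).mul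
        (continuous_const.mul (Complex.continuous_exp.comp
        (continuous_const.mul Complex.continuous_ofReal))))
    have hsplit : ∀ (i l : Fin N) (f : ℝ),
        Complex.exp ((2 * Real.pi * Complex.I * ((i : ℝ) - (l : ℝ))) * f)
          = Complex.exp ((2 * Real.pi * Complex.I * (i : ℝ)) * f)
            * Complex.exp ((2 * Real.pi * Complex.I * (-(l : ℝ))) * f) := by
      intro i l f
      rw [← Complex.exp_add]
      congr 1
      push_cast; ring
    have hconjg : ∀ f : ℝ, (starRingEnd ℂ) (g f)
        = ∑ l : Fin N, s l * Complex.exp ((2 * Real.pi * Complex.I * (-(l : ℝ))) * f) := by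
      intro f
      rw [hg, map_sum]
      refine Finset.sum_congr rfl fun l _ => ?_
      rw [_root_.map_mul, Complex.conj_conj, ← Complex.exp_conj]
      congr 1
      simp only [_root_.map_mul, Complex.conj_I, Complex.conj_ofReal, map_ofNat]
      ring
    have key : star s ⬝ᵥ RI.mulVec s = ∫ f in f₁..f₂, g f * (starRingEnd ℂ) (g f) := by
      calc star s ⬝ᵥ RI.mulVec s
          = ∑ i : Fin N, ∑ l : Fin N, ((starRingEnd ℂ) (s i) * s l) * RI i l := by
            simp only [dotProduct, Matrix.mulVec, dotProduct, Finset.mul_sum, Pi.star_apply,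
              RCLike.star_def]
            exact Finset.sum_congr rfl fun i _ => Finset.sum_congr rfl fun l _ => by ring
        _ = ∑ i : Fin N, ∑ l : Fin N, ∫ f in f₁..f₂,
              ((starRingEnd ℂ) (s i) * Complex.exp ((2 * Real.pi * Complex.I * (i : ℝ)) * f))
                * (s l * Complex.exp ((2 * Real.pi * Complex.I * (-(l : ℝ))) * f)) := by
            refine Finset.sum_congr rfl fun i _ => Finset.sum_congr rfl fun l _ => ?_
            rw [hRI' i l, ← intervalIntegral.integral_const_mul]
            congr 1
            funext f
            rw [hsplit i l f]
            ring
        _ = ∫ f in f₁..f₂, ∑ i : Fin N, ∑ l : Fin N,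
              ((starRingEnd ℂ) (s i) * Complex.exp ((2 * Real.pi * Complex.I * (i : ℝ)) * f))
                * (s l * Complex.exp ((2 * Real.pi * Complex.I * (-(l : ℝ))) * f)) := by
            have h1 : ∀ i : Fin N, (∫ f in f₁..f₂, ∑ l : Fin N,
                ((starRingEnd ℂ) (s i) * Complex.exp ((2 * Real.pi * Complex.I * (i : ℝ)) * f))
                  * (s l * Complex.exp ((2 * Real.pi * Complex.I * (-(l : ℝ))) * f)))
                = ∑ l : Fin N, ∫ f in f₁..f₂,
                ((starRingEnd ℂ) (s i) * Complex.exp ((2 * Real.pi * Complex.I * (i : ℝ)) * f))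
                  * (s l * Complex.exp ((2 * Real.pi * Complex.I * (-(l : ℝ))) * f)) :=
              fun i => intervalIntegral.integral_finset_sum
                (fun l _ => (hcont _ _ _ _).intervalIntegrable f₁ f₂)
            have h2 := intervalIntegral.integral_finset_sum
              (μ := MeasureTheory.volume) (a := f₁) (b := f₂) (s := Finset.univ)
              (f := fun (i : Fin N) (f : ℝ) => ∑ l : Fin N,
                ((starRingEnd ℂ) (s i) * Complex.exp ((2 * Real.pi * Complex.I * (i : ℝ)) * f))
                  * (s l * Complex.exp ((2 * Real.pi * Complex.I * (-(l : ℝ))) * f)))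
              (fun i _ => (continuous_finset_sum _ fun l _ =>
                hcont _ _ _ _).intervalIntegrable f₁ f₂)
            rw [h2]
            exact Finset.sum_congr rfl fun i _ => (h1 i).symm
        _ = ∫ f in f₁..f₂, g f * (starRingEnd ℂ) (g f) := by
            congr 1
            funext f
            rw [hconjg f, hg, Finset.sum_mul_sum]
    rw [key]
    have : (∫ f in f₁..f₂, g f * (starRingEnd ℂ) (g f))
        = ((∫ f in f₁..f₂, Complex.normSq (g f) : ℝ) : ℂ) := by
      rw [← intervalIntegral.integral_ofReal]
      congr 1
      funext f
      rw [Complex.mul_conj]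
    rw [this]
    refine ⟨Complex.ofReal_im _, ?_⟩
    rw [Complex.ofReal_re]
    exact intervalIntegral.integral_nonneg hf fun u _ => Complex.normSq_nonneg _
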